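/- Let ρ be a probability measure on a measurable space, and let μ₀ ≠ μ₁ be probability measures on the same space with D_KL(μ₀‖ρ) < ∞ and D_KL(μ₁‖ρ) < ∞. Then for every t ∈ (0, 1), the map μ ↦ D_KL(μ‖ρ) is strictly convex along the segment: D_KL(t·μ₀ + (1−t)·μ₁ ‖ ρ) < t·D_KL(μ₀‖ρ) + (1−t)·D_KL(μ₁‖ρ). -/

import Mathlib

open MeasureTheory
open scoped ENNReal Classical

/-- Kullback–Leibler divergence: `∫ log (dμ/dρ) dμ` when `μ ≪ ρ` and the integral is
finite (i.e. the integrand is integrable), and `+∞` otherwise. -/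
noncomputable def klDiv {X : Type*} [MeasurableSpace X] (μ ρ : Measure X) : ℝ≥0∞ :=
  if μ ≪ ρ ∧ Integrable (fun x => Real.log (μ.rnDeriv ρ x).toReal) μ
  then ENNReal.ofReal (∫ x, Real.log (μ.rnDeriv ρ x).toReal ∂μ)
  else ⊤

lemma sub_one_le_mul_log {y : ℝ} (hy : 0 ≤ y) : y - 1 ≤ y * Real.log y := by
  rcases eq_or_lt_of_le hy with h | h
  · simp [← h]
  · have h1 : Real.log y⁻¹ ≤ y⁻¹ - 1 := Real.log_le_sub_one_of_pos (by positivity)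
    rw [Real.log_inv] at h1
    have := mul_le_mul_of_nonneg_left h1 h.le
    nlinarith [mul_inv_cancel₀ h.ne']

/-- **Strict convexity of the KL divergence.** Let `ρ` be a probability measure and
`μ₀ ≠ μ₁` probability measures on the same space with `D_KL(μ₀‖ρ) < ∞` and
`D_KL(μ₁‖ρ) < ∞`. Then for every `t ∈ (0, 1)`,
`D_KL(t·μ₀ + (1-t)·μ₁ ‖ ρ) < t·D_KL(μ₀‖ρ) + (1-t)·D_KL(μ₁‖ρ)`. -/
theorem klDiv_strictly_convex
    {X : Type*} [MeasurableSpace X]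
    (ρ μ₀ μ₁ : Measure X) [IsProbabilityMeasure ρ]
    [IsProbabilityMeasure μ₀] [IsProbabilityMeasure μ₁]
    (hne : μ₀ ≠ μ₁) (h₀ : klDiv μ₀ ρ < ⊤) (h₁ : klDiv μ₁ ρ < ⊤)
    (t : ℝ) (ht : t ∈ Set.Ioo (0 : ℝ) 1) :
    klDiv (ENNReal.ofReal t • μ₀ + ENNReal.ofReal (1 - t) • μ₁) ρ
      < ENNReal.ofReal t * klDiv μ₀ ρ + ENNReal.ofReal (1 - t) * klDiv μ₁ ρ := by
  obtain ⟨ht0, ht1⟩ := ht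
  have ht1' : (0:ℝ) < 1 - t := by linarith
  -- extract the conditions from finiteness
  have hc₀ : μ₀ ≪ ρ ∧ Integrable (fun x => Real.log (μ₀.rnDeriv ρ x).toReal) μ₀ := by
    by_contra h; rw [klDiv, if_neg h] at h₀; exact absurd h₀ (lt_irrefl _)
  have hc₁ : μ₁ ≪ ρ ∧ Integrable (fun x => Real.log (μ₁.rnDeriv ρ x).toReal) μ₁ := by
    by_contra h; rw [klDiv, if_neg h] at h₁; exact absurd h₁ (lt_irrefl _)
  obtain ⟨hac₀, hint₀⟩ := hc₀
  obtain ⟨hac₁, hint₁⟩ := hc₁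
  set ν : Measure X := ENNReal.ofReal t • μ₀ + ENNReal.ofReal (1 - t) • μ₁ with hν
  haveI hfin₀ : IsFiniteMeasure (ENNReal.ofReal t • μ₀) := by
    constructor
    simp only [Measure.smul_apply, smul_eq_mul, measure_univ, mul_one]
    exact ENNReal.ofReal_lt_top
  haveI hfin₁ : IsFiniteMeasure (ENNReal.ofReal (1 - t) • μ₁) := by
    constructor
    simp only [Measure.smul_apply, smul_eq_mul, measure_univ, mul_one]
    exact ENNReal.ofReal_lt_top
  haveI hνfin : IsFiniteMeasure ν := by
    rw [hν]; infer_instance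
  have hacν : ν ≪ ρ :=
    Measure.AbsolutelyContinuous.add_left (hac₀.smul_left _) (hac₁.smul_left _)
  -- densities
  set f₀ : X → ℝ := fun x => (μ₀.rnDeriv ρ x).toReal with hf₀
  set f₁ : X → ℝ := fun x => (μ₁.rnDeriv ρ x).toReal with hf₁
  set fν : X → ℝ := fun x => (ν.rnDeriv ρ x).toReal with hfν
  have mf₀ : Measurable f₀ := (Measure.measurable_rnDeriv _ _).ennreal_toReal
  have mf₁ : Measurable f₁ := (Measure.measurable_rnDeriv _ _).ennreal_toReal
  have hf₀0 : ∀ x, 0 ≤ f₀ x := fun x => ENNReal.toReal_nonneg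
  have hf₁0 : ∀ x, 0 ≤ f₁ x := fun x => ENNReal.toReal_nonneg
  -- a.e. identity for the density of the mixture
  have hmix : fν =ᵐ[ρ] fun x => t * f₀ x + (1 - t) * f₁ x := by
    have h1 := Measure.rnDeriv_add' (ENNReal.ofReal t • μ₀) (ENNReal.ofReal (1 - t) • μ₁) ρ
    have h2 := Measure.rnDeriv_smul_left_of_ne_top μ₀ ρ (r := ENNReal.ofReal t)
      ENNReal.ofReal_ne_top
    have h3 := Measure.rnDeriv_smul_left_of_ne_top μ₁ ρ (r := ENNReal.ofReal (1 - t))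
      ENNReal.ofReal_ne_top
    filter_upwards [h1, h2, h3, Measure.rnDeriv_lt_top μ₀ ρ, Measure.rnDeriv_lt_top μ₁ ρ]
      with x hx1 hx2 hx3 hx4 hx5
    rw [hfν, hν]
    simp only [hx1, Pi.add_apply, hx2, hx3, Pi.smul_apply, smul_eq_mul]
    rw [ENNReal.toReal_add (by finiteness) (by finiteness), ENNReal.toReal_mul,
      ENNReal.toReal_mul, ENNReal.toReal_ofReal ht0.le, ENNReal.toReal_ofReal ht1'.le]
  -- integrability of the entropy integrands w.r.t. ρ
  have hφ₀ : Integrable (fun x => f₀ x * Real.log (f₀ x)) ρ := by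
    have := (integrable_rnDeriv_smul_iff hac₀
      (f := fun x => Real.log (f₀ x))).mpr hint₀
    simpa [smul_eq_mul] using this
  have hφ₁ : Integrable (fun x => f₁ x * Real.log (f₁ x)) ρ := by
    have := (integrable_rnDeriv_smul_iff hac₁
      (f := fun x => Real.log (f₁ x))).mpr hint₁
    simpa [smul_eq_mul] using this
  have hf₀int : Integrable f₀ ρ := Measure.integrable_toReal_rnDeriv
  have hf₁int : Integrable f₁ ρ := Measure.integrable_toReal_rnDeriv
  -- the mixture integrand
  set φm : X → ℝ := fun x => (t * f₀ x + (1 - t) * f₁ x) *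
    Real.log (t * f₀ x + (1 - t) * f₁ x) with hφm
  have mφm : Measurable φm := by
    have : Measurable fun x => t * f₀ x + (1 - t) * f₁ x :=
      (mf₀.const_mul t).add (mf₁.const_mul (1 - t))
    exact this.mul (Real.measurable_log.comp this)
  -- pointwise convexity bound
  have hconv : ∀ x, φm x ≤ t * (f₀ x * Real.log (f₀ x)) + (1 - t) * (f₁ x * Real.log (f₁ x)) := by
    intro x
    have := Real.convexOn_mul_log.2 (Set.mem_Ici.2 (hf₀0 x)) (Set.mem_Ici.2 (hf₁0 x))
      ht0.le ht1'.le (by ring)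
    simpa [smul_eq_mul] using this
  -- pointwise lower bound
  have hlow : ∀ x, t * f₀ x + (1 - t) * f₁ x - 1 ≤ φm x := fun x =>
    sub_one_le_mul_log (by positivity)
  -- integrability of φm
  have hφmint : Integrable φm ρ := by
    have hgint : Integrable (fun x =>
        |t * (f₀ x * Real.log (f₀ x)) + (1 - t) * (f₁ x * Real.log (f₁ x))|
        + |t * f₀ x + (1 - t) * f₁ x - 1|) ρ := by
      exact (((hφ₀.const_mul t).add (hφ₁.const_mul (1 - t))).abs).add
        ((((hf₀int.const_mul t).add (hf₁int.const_mul (1 - t))).sub (integrable_const 1)).abs)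
    refine Integrable.mono' hgint mφm.aestronglyMeasurable ?_
    refine Filter.Eventually.of_forall fun x => ?_
    rw [Real.norm_eq_abs, abs_le]
    constructor
    · have := hlow x
      have h2 := neg_abs_le (t * f₀ x + (1 - t) * f₁ x - 1)
      have h3 := abs_nonneg (t * (f₀ x * Real.log (f₀ x)) + (1 - t) * (f₁ x * Real.log (f₁ x)))
      linarith
    · have := hconv x
      have h2 := le_abs_self (t * (f₀ x * Real.log (f₀ x)) + (1 - t) * (f₁ x * Real.log (f₁ x)))
      have h3 := abs_nonneg (t * f₀ x + (1 - t) * f₁ x - 1)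
      linarith
  -- the mixture satisfies the klDiv condition
  have hφmcongr : (fun x => fν x • Real.log (fν x)) =ᵐ[ρ] φm := by
    filter_upwards [hmix] with x hx
    simp [hx, smul_eq_mul, hφm]
  have hintν : Integrable (fun x => Real.log (ν.rnDeriv ρ x).toReal) ν := by
    exact (integrable_rnDeriv_smul_iff hacν
      (f := fun x => Real.log (fν x))).mp (hφmint.congr hφmcongr.symm)
  -- integral identities
  have hI₀ : ∫ x, f₀ x * Real.log (f₀ x) ∂ρ = ∫ x, Real.log (μ₀.rnDeriv ρ x).toReal ∂μ₀ := by
    rw [← integral_rnDeriv_smul hac₀ (f := fun x => Real.log (f₀ x))]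
    simp [smul_eq_mul]
    rfl
  have hI₁ : ∫ x, f₁ x * Real.log (f₁ x) ∂ρ = ∫ x, Real.log (μ₁.rnDeriv ρ x).toReal ∂μ₁ := by
    rw [← integral_rnDeriv_smul hac₁ (f := fun x => Real.log (f₁ x))]
    simp [smul_eq_mul]
    rfl
  have hIν : ∫ x, φm x ∂ρ = ∫ x, Real.log (ν.rnDeriv ρ x).toReal ∂ν := by
    rw [← integral_rnDeriv_smul hacν (f := fun x => Real.log (fν x))]
    exact integral_congr_ae hφmcongr.symm
  -- the difference function is nonneg with positive integral
  set D : X → ℝ := fun x =>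
    t * (f₀ x * Real.log (f₀ x)) + (1 - t) * (f₁ x * Real.log (f₁ x)) - φm x with hD
  have hD0 : ∀ x, 0 ≤ D x := fun x => sub_nonneg.2 (hconv x)
  have hDint : Integrable D ρ :=
    ((hφ₀.const_mul t).add (hφ₁.const_mul (1 - t))).sub hφmint
  have hDpos : ∀ x, f₀ x ≠ f₁ x → 0 < D x := by
    intro x hx
    have := Real.strictConvexOn_mul_log.2 (Set.mem_Ici.2 (hf₀0 x)) (Set.mem_Ici.2 (hf₁0 x))
      hx ht0 ht1' (by ring)
    simp only [smul_eq_mul] at this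
    simp only [hD, hφm]
    linarith
  -- f₀ ≠ f₁ on a set of positive measure
  have hposset : 0 < ρ {x | f₀ x ≠ f₁ x} := by
    rw [pos_iff_ne_zero]
    intro hcontra
    have hae : f₀ =ᵐ[ρ] f₁ := by
      rwa [Filter.EventuallyEq, ae_iff]
    have hae2 : μ₀.rnDeriv ρ =ᵐ[ρ] μ₁.rnDeriv ρ := by
      filter_upwards [hae, Measure.rnDeriv_lt_top μ₀ ρ, Measure.rnDeriv_lt_top μ₁ ρ]
        with x hx h4 h5
      exact (ENNReal.toReal_eq_toReal_iff' h4.ne h5.ne).mp hx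
    apply hne
    rw [← Measure.withDensity_rnDeriv_eq μ₀ ρ hac₀, ← Measure.withDensity_rnDeriv_eq μ₁ ρ hac₁]
    exact withDensity_congr_ae hae2
  have hDintpos : 0 < ∫ x, D x ∂ρ := by
    rw [integral_pos_iff_support_of_nonneg hD0 hDint]
    refine lt_of_lt_of_le hposset (measure_mono ?_)
    intro x hx
    exact (hDpos x hx).ne'
  have hA : Integrable (fun x => t * f₀ x + (1 - t) * f₁ x) ρ :=
    (hf₀int.const_mul t).add (hf₁int.const_mul (1 - t))
  have hB : Integrable (fun x =>
      t * (f₀ x * Real.log (f₀ x)) + (1 - t) * (f₁ x * Real.log (f₁ x))) ρ :=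
    (hφ₀.const_mul t).add (hφ₁.const_mul (1 - t))
  -- strict real inequality
  have key : ∫ x, φm x ∂ρ
      < t * ∫ x, Real.log (μ₀.rnDeriv ρ x).toReal ∂μ₀
        + (1 - t) * ∫ x, Real.log (μ₁.rnDeriv ρ x).toReal ∂μ₁ := by
    rw [← hI₀, ← hI₁, ← integral_const_mul, ← integral_const_mul, ← integral_add
      (hφ₀.const_mul t) (hφ₁.const_mul (1 - t))]
    have h2 : ∫ x, D x ∂ρ = (∫ x, (t * (f₀ x * Real.log (f₀ x))
        + (1 - t) * (f₁ x * Real.log (f₁ x))) ∂ρ) - ∫ x, φm x ∂ρ :=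
      integral_sub hB hφmint
    linarith [hDintpos, h2 ▸ hDintpos]
  -- nonnegativity of the mixture integral
  have hnn : 0 ≤ ∫ x, φm x ∂ρ := by
    have hle : ∫ x, (t * f₀ x + (1 - t) * f₁ x - 1) ∂ρ ≤ ∫ x, φm x ∂ρ :=
      integral_mono (hA.sub (integrable_const 1)) hφmint hlow
    have heq : ∫ x, (t * f₀ x + (1 - t) * f₁ x - 1) ∂ρ = 0 := by
      rw [integral_sub hA (integrable_const 1),
        integral_add (hf₀int.const_mul t) (hf₁int.const_mul (1 - t)),
        integral_const_mul, integral_const_mul,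
        Measure.integral_toReal_rnDeriv hac₀, Measure.integral_toReal_rnDeriv hac₁]
      simp
    linarith
  -- assemble
  rw [klDiv, if_pos ⟨hacν, hintν⟩, klDiv, if_pos ⟨hac₀, hint₀⟩, klDiv, if_pos ⟨hac₁, hint₁⟩]
  rw [← hIν]
  calc ENNReal.ofReal (∫ x, φm x ∂ρ)
      < ENNReal.ofReal (t * ∫ x, Real.log (μ₀.rnDeriv ρ x).toReal ∂μ₀
        + (1 - t) * ∫ x, Real.log (μ₁.rnDeriv ρ x).toReal ∂μ₁) :=
        (ENNReal.ofReal_lt_ofReal_iff (lt_of_le_of_lt hnn key)).2 key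
    _ ≤ ENNReal.ofReal (t * ∫ x, Real.log (μ₀.rnDeriv ρ x).toReal ∂μ₀)
        + ENNReal.ofReal ((1 - t) * ∫ x, Real.log (μ₁.rnDeriv ρ x).toReal ∂μ₁) :=
        ENNReal.ofReal_add_le
    _ = ENNReal.ofReal t * ENNReal.ofReal (∫ x, Real.log (μ₀.rnDeriv ρ x).toReal ∂μ₀)
        + ENNReal.ofReal (1 - t) * ENNReal.ofReal (∫ x, Real.log (μ₁.rnDeriv ρ x).toReal ∂μ₁) := by
        rw [ENNReal.ofReal_mul ht0.le, ENNReal.ofReal_mul ht1'.le]
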